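/- Suppose V = V₁ ⊕ V₂ is a g-orthogonal direct sum decomposition of a finite-dimensional real vector space with nondegenerate symmetric bilinear form g, J : V₁ → V₁ is a linear map with J² = −id and g(JX, JY) = g(X, Y) for all X, Y ∈ V₁, and I : V₂ → V₂ is a linear map with I² = id and g(IX, IY) = −g(X, Y) for all X, Y ∈ V₂. Extend I and J to linear maps on V by zero on the complementary summand, and let K : V_ℂ → V_ℂ be the ℂ-linear extension of I plus i times the ℂ-linear extension of J. Then K is a mixed structure on (V, g): K² = id, K ∘ K̄ = K̄ ∘ K, and g(KX, KY) = g(K̄X, K̄Y) = −g(X, Y) for all X, Y ∈ V_ℂ. -/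
import Mathlib


open scoped TensorProduct

/-- The standard conjugation `σ` on the complexification `ℂ ⊗[ℝ] V`: the `ℂ`-antilinear
(`ℝ`-linear) involution whose fixed points are the real vectors. -/
noncomputable def conjC (V : Type*) [AddCommGroup V] [Module ℝ V] :
    (ℂ ⊗[ℝ] V) →ₗ[ℝ] (ℂ ⊗[ℝ] V) :=
  TensorProduct.map Complex.conjAe.toLinearMap LinearMap.id

/-- The canonical inclusion of `V` into its complexification `ℂ ⊗[ℝ] V`, `v ↦ 1 ⊗ v`. -/
noncomputable def inclC (V : Type*) [AddCommGroup V] [Module ℝ V] :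
    V →ₗ[ℝ] (ℂ ⊗[ℝ] V) :=
  TensorProduct.mk ℝ ℂ V 1

/-- The conjugate `K̄ = σ ∘ K ∘ σ` of a `ℂ`-linear map on the complexification. -/
noncomputable def conjMap {V : Type*} [AddCommGroup V] [Module ℝ V]
    (K : (ℂ ⊗[ℝ] V) →ₗ[ℂ] (ℂ ⊗[ℝ] V)) : (ℂ ⊗[ℝ] V) → (ℂ ⊗[ℝ] V) :=
  fun x => conjC V (K (conjC V x))

/-- A mixed structure on `(V, g)`: a `ℂ`-linear map `K` on `V_ℂ = ℂ ⊗[ℝ] V` with `K² = id`,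
`K K̄ = K̄ K`, and `g(KX, KY) = g(K̄X, K̄Y) = −g(X, Y)` for the `ℂ`-bilinear extension of
`g`. -/
def IsMixedStructure (V : Type*) [AddCommGroup V] [Module ℝ V]
    (g : LinearMap.BilinForm ℝ V) (K : (ℂ ⊗[ℝ] V) →ₗ[ℂ] (ℂ ⊗[ℝ] V)) : Prop :=
  (∀ x, K (K x) = x) ∧
  (∀ x, K (conjMap K x) = conjMap K (K x)) ∧
  (∀ x y, (LinearMap.BilinForm.baseChange ℂ g) (K x) (K y)
    = -(LinearMap.BilinForm.baseChange ℂ g) x y) ∧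
  (∀ x y, (LinearMap.BilinForm.baseChange ℂ g) (conjMap K x) (conjMap K y)
    = -(LinearMap.BilinForm.baseChange ℂ g) x y)

/-- Given a `g`-orthogonal decomposition `V = V₁ ⊕ V₂`, a metric-compatible complex
structure `J` on `V₁` and a metric-compatible paracomplex structure `I` on `V₂`
(each extended by zero to all of `V`), the map `K := I_ℂ + i·J_ℂ` on `V_ℂ = ℂ ⊗[ℝ] V`
is a mixed structure on `(V, g)`. -/
theorem mixedStructure_of_para_and_complex (V : Type*) [AddCommGroup V] [Module ℝ V]
    [FiniteDimensional ℝ V] (g : LinearMap.BilinForm ℝ V)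
    (hsymm : ∀ x y, g x y = g y x) (hnd : ∀ x, (∀ y, g x y = 0) → x = 0)
    (V₁ V₂ : Submodule ℝ V) (hcompl : IsCompl V₁ V₂)
    (horth : ∀ x ∈ V₁, ∀ y ∈ V₂, g x y = 0)
    (J : V →ₗ[ℝ] V)
    (hJmap : ∀ x ∈ V₁, J x ∈ V₁) (hJzero : ∀ y ∈ V₂, J y = 0)
    (hJ2 : ∀ x ∈ V₁, J (J x) = -x)
    (hJg : ∀ x ∈ V₁, ∀ y ∈ V₁, g (J x) (J y) = g x y)
    (I : V →ₗ[ℝ] V)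
    (hImap : ∀ x ∈ V₂, I x ∈ V₂) (hIzero : ∀ y ∈ V₁, I y = 0)
    (hI2 : ∀ x ∈ V₂, I (I x) = x)
    (hIg : ∀ x ∈ V₂, ∀ y ∈ V₂, g (I x) (I y) = -g x y) :
    IsMixedStructure V g
      (LinearMap.baseChange ℂ I + Complex.I • LinearMap.baseChange ℂ J) := by
  -- decomposition
  have hdec : ∀ x : V, ∃ x₁ ∈ V₁, ∃ x₂ ∈ V₂, x = x₁ + x₂ := by
    intro x
    have hx : x ∈ V₁ ⊔ V₂ := by rw [hcompl.sup_eq_top]; trivial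
    rcases Submodule.mem_sup.mp hx with ⟨a, ha, b, hb, hab⟩
    exact ⟨a, ha, b, hb, hab.symm⟩
  -- real-level lemmas
  have hIJ0 : ∀ x, I (J x) = 0 := by
    intro x
    rcases hdec x with ⟨a, ha, b, hb, rfl⟩
    simp [map_add, hJzero b hb, hIzero _ (hJmap a ha)]
  have hJI0 : ∀ x, J (I x) = 0 := by
    intro x
    rcases hdec x with ⟨a, ha, b, hb, rfl⟩
    simp [map_add, hIzero a ha, hJzero _ (hImap b hb)]
  have hK2 : ∀ x, I (I x) = x + J (J x) := by
    intro x
    rcases hdec x with ⟨a, ha, b, hb, rfl⟩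
    simp [map_add, hIzero a ha, hJzero b hb, hI2 b hb, hJ2 a ha]
  have hgIJ : ∀ x y, g (I x) (J y) = 0 := by
    intro x y
    rcases hdec x with ⟨a, ha, b, hb, rfl⟩
    rcases hdec y with ⟨c, hc, d, hd, rfl⟩
    rw [hsymm]
    simp [map_add, hIzero a ha, hJzero d hd]
    exact horth _ (hJmap c hc) _ (hImap b hb)
  have hgJI : ∀ x y, g (J x) (I y) = 0 := by
    intro x y
    rcases hdec x with ⟨a, ha, b, hb, rfl⟩
    rcases hdec y with ⟨c, hc, d, hd, rfl⟩
    simp [map_add, hIzero c hc, hJzero b hb]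
    exact horth _ (hJmap a ha) _ (hImap d hd)
  have hgK : ∀ x y, g (I x) (I y) - g (J x) (J y) = -g x y := by
    intro x y
    rcases hdec x with ⟨a, ha, b, hb, rfl⟩
    rcases hdec y with ⟨c, hc, d, hd, rfl⟩
    simp [map_add, hIzero a ha, hIzero c hc, hJzero b hb, hJzero d hd,
      hIg b hb d hd, hJg a ha c hc]
    have h1 := horth a ha d hd
    have h2 := horth c hc b hb
    rw [hsymm b c] at *
    linarith [hsymm b c]
  set A := LinearMap.baseChange ℂ I with hA
  set B := LinearMap.baseChange ℂ J with hB
  set gC := LinearMap.BilinForm.baseChange ℂ g with hgC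
  -- complexified pointwise lemmas
  have hAB : ∀ x, A (B x) = 0 := by
    intro x
    induction x using TensorProduct.induction_on with
    | zero => simp
    | tmul a v => simp [hA, hB, hIJ0]
    | add x y hx hy => simp [map_add, hx, hy]
  have hBA : ∀ x, B (A x) = 0 := by
    intro x
    induction x using TensorProduct.induction_on with
    | zero => simp
    | tmul a v => simp [hA, hB, hJI0]
    | add x y hx hy => simp [map_add, hx, hy]
  have hAA : ∀ x, A (A x) = x + B (B x) := by
    intro x
    induction x using TensorProduct.induction_on with
    | zero => simp
    | tmul a v => simp [hA, hB, hK2, TensorProduct.tmul_add]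
    | add x y hx hy =>
      simp only [map_add, hx, hy]; abel
  -- conjMap computation
  set K : (ℂ ⊗[ℝ] V) →ₗ[ℂ] (ℂ ⊗[ℝ] V) := A + Complex.I • B with hK
  have hconjC : ∀ (a : ℂ) (v : V), conjC V (a ⊗ₜ[ℝ] v) = (starRingEnd ℂ a) ⊗ₜ[ℝ] v := by
    intro a v; simp [conjC]
  have hconj : ∀ x, conjMap K x = A x - Complex.I • B x := by
    intro x
    induction x using TensorProduct.induction_on with
    | zero => simp [conjMap]
    | tmul a v =>
      simp only [conjMap, hconjC, hK, LinearMap.add_apply, LinearMap.smul_apply,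
        hA, hB, LinearMap.baseChange_tmul, map_add, TensorProduct.smul_tmul', hconjC,
        map_mul, Complex.conj_conj, Complex.conj_I, smul_eq_mul]
      ring_nf
      rw [sub_eq_add_neg, ← TensorProduct.neg_tmul]
    | add x y hx hy =>
      simp only [conjMap, map_add] at hx hy ⊢
      rw [hx, hy]; module
  -- bilinear form lemmas
  have hgAB : ∀ x y, gC (A x) (B y) = 0 := by
    intro x y
    induction x using TensorProduct.induction_on generalizing y with
    | zero => simp
    | tmul a v =>
      induction y using TensorProduct.induction_on with
      | zero => simp
      | tmul b w => simp [hA, hB, hgC, hgIJ]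
      | add y z hy hz => simp [map_add, hy, hz]
    | add x x' hx hx' => simp [map_add, LinearMap.add_apply, hx, hx']
  have hgBA : ∀ x y, gC (B x) (A y) = 0 := by
    intro x y
    induction x using TensorProduct.induction_on generalizing y with
    | zero => simp
    | tmul a v =>
      induction y using TensorProduct.induction_on with
      | zero => simp
      | tmul b w => simp [hA, hB, hgC, hgJI]
      | add y z hy hz => simp [map_add, hy, hz]
    | add x x' hx hx' => simp [map_add, LinearMap.add_apply, hx, hx']
  have hgK2 : ∀ x y, gC (A x) (A y) - gC (B x) (B y) = -gC x y := by
    intro x y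
    induction x using TensorProduct.induction_on generalizing y with
    | zero => simp
    | tmul a v =>
      induction y using TensorProduct.induction_on with
      | zero => simp
      | tmul b w =>
        simp only [hA, hB, hgC, LinearMap.baseChange_tmul,
          LinearMap.BilinForm.baseChange_tmul]
        rw [← sub_smul, hgK, neg_smul]
      | add y z hy hz =>
        simp only [map_add]
        linear_combination hy + hz
    | add x x' hx hx' =>
      simp only [map_add, LinearMap.add_apply]
      linear_combination hx y + hx' y
  refine ⟨?_, ?_, ?_, ?_⟩
  · intro x
    show K (K x) = x
    simp only [hK, LinearMap.add_apply, LinearMap.smul_apply, map_add, map_smul,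
      hAB, hBA, hAA, smul_zero, smul_smul, Complex.I_mul_I, neg_one_smul,
      add_zero, zero_add]
    module
  · intro x
    show K (conjMap K x) = conjMap K (K x)
    rw [hconj, hconj]
    simp only [hK, LinearMap.add_apply, LinearMap.smul_apply, map_add, map_sub,
      map_smul, hAB, hBA, smul_zero, sub_zero, zero_sub, add_zero, zero_add]
  · intro x y
    show gC (K x) (K y) = -gC x y
    simp only [hK, LinearMap.add_apply, LinearMap.smul_apply, map_add, map_smul,
      hgAB, hgBA, smul_zero, smul_smul, Complex.I_mul_I, neg_one_smul, add_zero,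
      zero_add, smul_eq_mul]
    linear_combination hgK2 x y + (gC (B x)) (B y) * Complex.I_sq
  · intro x y
    show gC (conjMap K x) (conjMap K y) = -gC x y
    rw [hconj, hconj]
    simp only [map_sub, map_smul, LinearMap.sub_apply, LinearMap.smul_apply,
      hgAB, hgBA, smul_zero, smul_smul, Complex.I_mul_I, neg_one_smul, sub_zero,
      zero_sub, smul_eq_mul]
    linear_combination hgK2 x y + (gC (B x)) (B y) * Complex.I_sq
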